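/- Quantum union bound for density operators: let ρ be a density matrix on ℂ^d (positive semi-definite with trace one), let P₁, ..., P_L be orthogonal projection matrices on ℂ^d, and let c > 0. Then 1 − Tr(P_L P_{L-1} ⋯ P₁ ρ P₁ ⋯ P_{L-1} P_L) ≤ (1 + c)·Tr((I − P_L) ρ) + (2 + c + c⁻¹)·∑_{i=2}^{L-1} Tr((I − P_i) ρ) + (2 + c⁻¹)·Tr((I − P₁) ρ). -/

import Mathlib

open scoped ComplexOrder

/-- `descM P k = P k * P (k-1) * ⋯ * P 1`, empty product is the identity matrix. -/
noncomputable def descM {d : ℕ} (P : ℕ → Matrix (Fin d) (Fin d) ℂ) : ℕ → Matrix (Fin d) (Fin d) ℂ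
  | 0 => 1
  | k + 1 => P (k + 1) * descM P k

/-- `ascM P k = P 1 * P 2 * ⋯ * P k`, empty product is the identity matrix. -/
noncomputable def ascM {d : ℕ} (P : ℕ → Matrix (Fin d) (Fin d) ℂ) : ℕ → Matrix (Fin d) (Fin d) ℂ
  | 0 => 1
  | k + 1 => ascM P k * P (k + 1)

open Matrix

namespace QUB5

variable {d : ℕ}

noncomputable def rr (X Y : Matrix (Fin d) (Fin d) ℂ) : ℝ := ((Xᴴ * Y).trace).re

lemma rr_nonneg (X : Matrix (Fin d) (Fin d) ℂ) : 0 ≤ rr X X := by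
  unfold rr
  rw [Matrix.trace]
  rw [Complex.re_sum]
  refine Finset.sum_nonneg fun i _ => ?_
  rw [Matrix.diag_apply, Matrix.mul_apply, Complex.re_sum]
  refine Finset.sum_nonneg fun j _ => ?_
  rw [Matrix.conjTranspose_apply]
  simpa [Complex.normSq_apply] using Complex.normSq_nonneg (X j i)

lemma rr_comm (X Y : Matrix (Fin d) (Fin d) ℂ) : rr X Y = rr Y X := by
  unfold rr
  have : (Yᴴ * X).trace = star ((Xᴴ * Y).trace) := by
    rw [← Matrix.trace_conjTranspose, Matrix.conjTranspose_mul, Matrix.conjTranspose_conjTranspose]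
  rw [this]
  simp

lemma rr_add_left (X Y Z : Matrix (Fin d) (Fin d) ℂ) : rr (X + Y) Z = rr X Z + rr Y Z := by
  simp [rr, Matrix.conjTranspose_add, Matrix.add_mul]

lemma rr_add_right (X Y Z : Matrix (Fin d) (Fin d) ℂ) : rr X (Y + Z) = rr X Y + rr X Z := by
  simp [rr, Matrix.mul_add]

lemma rr_sub_left (X Y Z : Matrix (Fin d) (Fin d) ℂ) : rr (X - Y) Z = rr X Z - rr Y Z := by
  simp [rr, Matrix.conjTranspose_sub, Matrix.sub_mul]

lemma rr_sub_right (X Y Z : Matrix (Fin d) (Fin d) ℂ) : rr X (Y - Z) = rr X Y - rr X Z := by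
  simp [rr, Matrix.mul_sub]

lemma rr_smul_left (a : ℝ) (X Y : Matrix (Fin d) (Fin d) ℂ) :
    rr ((a : ℂ) • X) Y = a * rr X Y := by
  simp [rr, Matrix.smul_mul]

lemma rr_smul_right (a : ℝ) (X Y : Matrix (Fin d) (Fin d) ℂ) :
    rr X ((a : ℂ) • Y) = a * rr X Y := by
  simp [rr, Matrix.mul_smul]

lemma rr_ortho {A B : Matrix (Fin d) (Fin d) ℂ} (h : Aᴴ * B = 0)
    (x y : Matrix (Fin d) (Fin d) ℂ) : rr (A * x) (B * y) = 0 := by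
  unfold rr
  have : (A * x)ᴴ * (B * y) = xᴴ * ((Aᴴ * B) * y) := by
    rw [Matrix.conjTranspose_mul]
    simp only [Matrix.mul_assoc]
  rw [this, h]
  simp

lemma rr_amgm {c : ℝ} (hc : 0 < c) (X Y : Matrix (Fin d) (Fin d) ℂ) :
    -(2 * rr X Y) ≤ c * rr X X + c⁻¹ * rr Y Y := by
  have h0 := rr_nonneg ((c : ℂ) • X + Y)
  rw [rr_add_left, rr_add_right, rr_add_right, rr_smul_left, rr_smul_left, rr_smul_right,
    rr_smul_right, rr_comm Y X] at h0
  have hci : c * c⁻¹ = 1 := mul_inv_cancel₀ hc.ne'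
  nlinarith [rr_nonneg X, rr_nonneg Y, mul_pos hc hc]

lemma weighted {c : ℝ} (hc : 0 < c) (x y : Matrix (Fin d) (Fin d) ℂ) :
    rr (x - y) (x - y) ≤ (1 + c) * rr x x + (1 + c⁻¹) * rr y y := by
  rw [rr_sub_left, rr_sub_right, rr_sub_right, rr_comm y x]
  have := rr_amgm hc x y
  linarith

section Projector

variable {m : Matrix (Fin d) (Fin d) ℂ}

lemma QH (hm : mᴴ = m) : (1 - m)ᴴ = 1 - m := by
  rw [Matrix.conjTranspose_sub, Matrix.conjTranspose_one, hm]

lemma PQ0 (hm : mᴴ = m) (hmm : m * m = m) : mᴴ * (1 - m) = 0 := by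
  rw [hm, Matrix.mul_sub, Matrix.mul_one, hmm, sub_self]

lemma QP0 (hm : mᴴ = m) (hmm : m * m = m) : (1 - m)ᴴ * m = 0 := by
  rw [QH hm, Matrix.sub_mul, Matrix.one_mul, hmm, sub_self]

lemma pyth (hm : mᴴ = m) (hmm : m * m = m) (x : Matrix (Fin d) (Fin d) ℂ) :
    rr x x = rr (m * x) (m * x) + rr ((1 - m) * x) ((1 - m) * x) := by
  have hx : x = m * x + (1 - m) * x := by noncomm_ring
  conv_lhs => rw [hx]
  rw [rr_add_left, rr_add_right, rr_add_right, rr_ortho (PQ0 hm hmm), rr_ortho (QP0 hm hmm)]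
  ring

lemma decomp_Ev (hm : mᴴ = m) (hmm : m * m = m) (s w : Matrix (Fin d) (Fin d) ℂ) :
    rr ((1 - m) * s + m * w) ((1 - m) * s + m * w)
      = rr ((1 - m) * s) ((1 - m) * s) + rr (m * w) (m * w) := by
  rw [rr_add_left, rr_add_right, rr_add_right, rr_ortho (PQ0 hm hmm), rr_ortho (QP0 hm hmm)]
  ring

end Projector

noncomputable def Tq (P : ℕ → Matrix (Fin d) (Fin d) ℂ) (S : Matrix (Fin d) (Fin d) ℂ) (k : ℕ) : ℝ :=
  rr (descM P k * S) (descM P k * S)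

noncomputable def Ev (P : ℕ → Matrix (Fin d) (Fin d) ℂ) (S : Matrix (Fin d) (Fin d) ℂ) (k : ℕ) : ℝ :=
  rr ((1 - descM P k) * S) ((1 - descM P k) * S)

noncomputable def ev (P : ℕ → Matrix (Fin d) (Fin d) ℂ) (S : Matrix (Fin d) (Fin d) ℂ) (i : ℕ) : ℝ :=
  rr ((1 - P i) * S) ((1 - P i) * S)

variable (P : ℕ → Matrix (Fin d) (Fin d) ℂ) (S : Matrix (Fin d) (Fin d) ℂ)

lemma Tq_step (k : ℕ) (hm : (P (k+1))ᴴ = P (k+1)) (hmm : P (k+1) * P (k+1) = P (k+1)) :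
    Tq P S k = Tq P S (k+1)
      + rr ((1 - P (k+1)) * (descM P k * S)) ((1 - P (k+1)) * (descM P k * S)) := by
  have h := pyth hm hmm (descM P k * S)
  unfold Tq
  rw [show descM P (k+1) = P (k+1) * descM P k from rfl, Matrix.mul_assoc]
  exact h

lemma Ev_step (k : ℕ) (hm : (P (k+1))ᴴ = P (k+1)) (hmm : P (k+1) * P (k+1) = P (k+1)) :
    Ev P S (k+1) = ev P S (k+1)
      + rr (P (k+1) * ((1 - descM P k) * S)) (P (k+1) * ((1 - descM P k) * S)) := by
  have hv : (1 - descM P (k+1)) * S = (1 - P (k+1)) * S + P (k+1) * ((1 - descM P k) * S) := by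
    rw [show descM P (k+1) = P (k+1) * descM P k from rfl]
    noncomm_ring
  unfold Ev ev
  rw [hv, decomp_Ev hm hmm]

lemma main_step (k : ℕ) (hm : (P (k+1))ᴴ = P (k+1)) (hmm : P (k+1) * P (k+1) = P (k+1))
    {c : ℝ} (hc : 0 < c) :
    Tq P S k - Tq P S (k+1)
      ≤ (1 + c) * ev P S (k+1) + (1 + c⁻¹) * (Ev P S k - Ev P S (k+1) + ev P S (k+1)) := by
  have h1 := Tq_step P S k hm hmm
  have h2 : descM P k * S = S - (1 - descM P k) * S := by noncomm_ring
  have h3 : rr ((1 - P (k+1)) * (descM P k * S)) ((1 - P (k+1)) * (descM P k * S))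
      ≤ (1 + c) * rr ((1 - P (k+1)) * S) ((1 - P (k+1)) * S)
        + (1 + c⁻¹) * rr ((1 - P (k+1)) * ((1 - descM P k) * S))
            ((1 - P (k+1)) * ((1 - descM P k) * S)) := by
    rw [h2, Matrix.mul_sub]
    exact weighted hc _ _
  have h4 := Ev_step P S k hm hmm
  have h5 : Ev P S k = rr (P (k+1) * ((1 - descM P k) * S)) (P (k+1) * ((1 - descM P k) * S))
      + rr ((1 - P (k+1)) * ((1 - descM P k) * S)) ((1 - P (k+1)) * ((1 - descM P k) * S)) := by
    unfold Ev
    exact pyth hm hmm _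
  have h6 : ev P S (k+1) = rr ((1 - P (k+1)) * S) ((1 - P (k+1)) * S) := rfl
  rw [← h6] at h3
  have h7 : Ev P S k - Ev P S (k+1) + ev P S (k+1)
      = rr ((1 - P (k+1)) * ((1 - descM P k) * S)) ((1 - P (k+1)) * ((1 - descM P k) * S)) := by
    linarith
  rw [h7]
  linarith


lemma descM_conjT {d : ℕ} {L : ℕ} (P : ℕ → Matrix (Fin d) (Fin d) ℂ)
    (h : ∀ i ∈ Finset.Icc 1 L, (P i)ᴴ = P i) :
    ∀ k, k ≤ L → (descM P k)ᴴ = ascM P k := by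
  intro k
  induction k with
  | zero => intro _; simp [descM, ascM]
  | succ n ih =>
    intro hk
    rw [show descM P (n+1) = P (n+1) * descM P n from rfl,
        show ascM P (n+1) = ascM P n * P (n+1) from rfl,
        Matrix.conjTranspose_mul, ih (by omega),
        h (n+1) (Finset.mem_Icc.mpr ⟨by omega, hk⟩)]

end QUB5

theorem stmt5 {d : ℕ} (ρ : Matrix (Fin d) (Fin d) ℂ)
    (hρ : ρ.PosSemidef) (hρtr : ρ.trace = 1)
    (L : ℕ) (hL : 1 ≤ L) (P : ℕ → Matrix (Fin d) (Fin d) ℂ)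
    (hherm : ∀ i ∈ Finset.Icc 1 L, (P i).IsHermitian)
    (hidem : ∀ i ∈ Finset.Icc 1 L, P i * P i = P i)
    (c : ℝ) (hc : 0 < c) :
    1 - ((descM P L * ρ * ascM P L).trace).re
      ≤ (1 + c) * (((1 - P L) * ρ).trace).re
        + (2 + c + c⁻¹) * ∑ i ∈ Finset.Icc 2 (L - 1), (((1 - P i) * ρ).trace).re
        + (2 + c⁻¹) * (((1 - P 1) * ρ).trace).re := by
  obtain ⟨S, hSH, hS2⟩ : ∃ S : Matrix (Fin d) (Fin d) ℂ, Sᴴ = S ∧ S * S = ρ :=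
    by
      open MatrixOrder in
      exact ⟨CFC.sqrt ρ, (CFC.sqrt_nonneg ρ).posSemidef.isHermitian, CFC.sqrt_mul_sqrt_self ρ hρ.nonneg⟩
  have hm : ∀ i ∈ Finset.Icc 1 L, (P i)ᴴ = P i := fun i hi => hherm i hi
  have hevtr : ∀ i ∈ Finset.Icc 1 L, QUB5.ev P S i = (((1 - P i) * ρ).trace).re := by
    intro i hi
    have hQH : (1 - P i)ᴴ = 1 - P i := QUB5.QH (hm i hi)
    have hQQ : (1 - P i) * (1 - P i) = 1 - P i := by
      have h0 : (1 - P i) * (1 - P i) = 1 - P i - (P i - P i * P i) := by noncomm_ring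
      rw [hidem i hi, sub_self, sub_zero] at h0
      exact h0
    unfold QUB5.ev QUB5.rr
    rw [Matrix.conjTranspose_mul, hSH, hQH]
    have e1 : (S * (1 - P i)) * ((1 - P i) * S) = S * ((1 - P i) * S) := by
      rw [Matrix.mul_assoc, ← Matrix.mul_assoc (1 - P i), hQQ]
    rw [e1, Matrix.trace_mul_comm, Matrix.mul_assoc, hS2]
  have hTL : QUB5.Tq P S L = ((descM P L * ρ * ascM P L).trace).re := by
    unfold QUB5.Tq QUB5.rr
    rw [Matrix.conjTranspose_mul, hSH, Matrix.trace_mul_comm]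
    have e1 : (descM P L * S) * (S * (descM P L)ᴴ) = descM P L * ρ * ascM P L := by
      rw [QUB5.descM_conjT P hm L le_rfl, ← hS2]
      simp only [Matrix.mul_assoc]
    rw [e1]
  have hT0 : QUB5.Tq P S 0 = 1 := by
    unfold QUB5.Tq QUB5.rr
    rw [show descM P 0 = (1 : Matrix (Fin d) (Fin d) ℂ) from rfl, Matrix.one_mul, hSH, hS2, hρtr]
    simp
  have tele : 1 - QUB5.Tq P S L
      = ∑ k ∈ Finset.range L, (QUB5.Tq P S k - QUB5.Tq P S (k+1)) := by
    rw [Finset.sum_range_sub' (QUB5.Tq P S) L, hT0]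
  have hD0 : QUB5.Tq P S 0 - QUB5.Tq P S 1 = QUB5.ev P S 1 := by
    have h := QUB5.Tq_step P S 0 (hm 1 (Finset.mem_Icc.mpr ⟨le_rfl, hL⟩))
      (hidem 1 (Finset.mem_Icc.mpr ⟨le_rfl, hL⟩))
    rw [show descM P 0 * S = S from by
      rw [show descM P 0 = (1 : Matrix (Fin d) (Fin d) ℂ) from rfl, Matrix.one_mul]] at h
    rw [show QUB5.rr ((1 - P (0+1)) * S) ((1 - P (0+1)) * S) = QUB5.ev P S 1 from rfl] at h
    linarith
  have hev1nn : (0:ℝ) ≤ QUB5.ev P S 1 := QUB5.rr_nonneg _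
  rw [← hevtr L (Finset.mem_Icc.mpr ⟨hL, le_rfl⟩), ← hevtr 1 (Finset.mem_Icc.mpr ⟨le_rfl, hL⟩),
    ← hTL]
  rcases eq_or_lt_of_le hL with hL1 | hL2
  · -- L = 1
    subst hL1
    simp only [show (1:ℕ) - 1 = 0 from rfl]
    rw [show Finset.Icc 2 0 = (∅ : Finset ℕ) from rfl, Finset.sum_empty]
    have h1 : 1 - QUB5.Tq P S 1 = QUB5.ev P S 1 := by
      rw [tele, Finset.sum_range_one, hD0]
    rw [h1]
    have hcinn : (0:ℝ) ≤ c⁻¹ := by positivity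
    nlinarith [hev1nn, hc]
  · -- L ≥ 2
    obtain ⟨M, rfl⟩ : ∃ M, L = M + 2 := ⟨L - 2, by omega⟩
    simp only [show M + 2 - 1 = M + 1 from rfl]
    have hsum2 : ∑ i ∈ Finset.Icc 2 (M+1), (((1 - P i) * ρ).trace).re
        = ∑ i ∈ Finset.Icc 2 (M+1), QUB5.ev P S i := by
      refine Finset.sum_congr rfl fun i hi => ?_
      obtain ⟨h2i, hiM⟩ := Finset.mem_Icc.mp hi
      exact (hevtr i (Finset.mem_Icc.mpr ⟨by omega, by omega⟩)).symm
    rw [hsum2]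
    have hstep : ∀ k ∈ Finset.range (M+1), QUB5.Tq P S (k+1) - QUB5.Tq P S (k+1+1)
        ≤ (1+c) * QUB5.ev P S (k+1+1)
          + (1+c⁻¹) * (QUB5.Ev P S (k+1) - QUB5.Ev P S (k+1+1) + QUB5.ev P S (k+1+1)) := by
      intro k hk
      have hkM : k < M + 1 := Finset.mem_range.mp hk
      exact QUB5.main_step P S (k+1) (hm (k+2) (Finset.mem_Icc.mpr ⟨by omega, by omega⟩))
        (hidem (k+2) (Finset.mem_Icc.mpr ⟨by omega, by omega⟩)) hc
    have hble := Finset.sum_le_sum hstep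
    have hEtel : ∑ k ∈ Finset.range (M+1), (QUB5.Ev P S (k+1) - QUB5.Ev P S (k+1+1))
        = QUB5.Ev P S 1 - QUB5.Ev P S (M+1+1) :=
      Finset.sum_range_sub' (fun k => QUB5.Ev P S (k+1)) (M+1)
    have hsplit : ∑ k ∈ Finset.range (M+1), ((1+c) * QUB5.ev P S (k+1+1)
          + (1+c⁻¹) * (QUB5.Ev P S (k+1) - QUB5.Ev P S (k+1+1) + QUB5.ev P S (k+1+1)))
        = (2+c+c⁻¹) * (∑ k ∈ Finset.range (M+1), QUB5.ev P S (k+1+1))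
          + (1+c⁻¹) * (QUB5.Ev P S 1 - QUB5.Ev P S (M+2)) := by
      rw [Finset.mul_sum, show (M+1+1) = M+2 from rfl, ← hEtel, Finset.mul_sum,
        ← Finset.sum_add_distrib]
      exact Finset.sum_congr rfl fun k _ => by ring
    rw [hsplit] at hble
    have hEv1 : QUB5.Ev P S 1 = QUB5.ev P S 1 := by
      unfold QUB5.Ev QUB5.ev
      rw [show descM P 1 = P 1 * descM P 0 from rfl,
        show descM P 0 = (1 : Matrix (Fin d) (Fin d) ℂ) from rfl, Matrix.mul_one]
    rw [hEv1] at hble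
    have hEvL : QUB5.ev P S (M+2) ≤ QUB5.Ev P S (M+2) := by
      have h := QUB5.Ev_step P S (M+1) (hm (M+2) (Finset.mem_Icc.mpr ⟨by omega, by omega⟩))
        (hidem (M+2) (Finset.mem_Icc.mpr ⟨by omega, by omega⟩))
      have h0 := QUB5.rr_nonneg (P (M+1+1) * ((1 - descM P (M+1)) * S))
      rw [show (M+1+1) = M+2 from rfl] at h h0
      linarith
    have hIcc : ∑ k ∈ Finset.range (M+1), QUB5.ev P S (k+1+1)
        = ∑ i ∈ Finset.Icc 2 (M+1), QUB5.ev P S i + QUB5.ev P S (M+2) := by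
      have h1 : ∑ i ∈ Finset.Icc 2 (M+1+1), QUB5.ev P S i
          = ∑ i ∈ Finset.Icc 2 (M+1), QUB5.ev P S i + QUB5.ev P S (M+1+1) :=
        Finset.sum_Icc_succ_top (by omega) _
      rw [show (M+1+1) = M+2 from rfl] at h1
      rw [← h1, ← Finset.Ico_add_one_right_eq_Icc, Finset.sum_Ico_eq_sum_range]
      rw [show M + 2 + 1 - 2 = M + 1 from by omega]
      exact Finset.sum_congr rfl fun k _ => by rw [Nat.add_comm 2 k]
    rw [hIcc] at hble
    have hnn : (0:ℝ) ≤ 1 + c⁻¹ := by positivity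
    have hmul : (1+c⁻¹) * (QUB5.ev P S 1 - QUB5.Ev P S (M+2))
        ≤ (1+c⁻¹) * (QUB5.ev P S 1 - QUB5.ev P S (M+2)) :=
      mul_le_mul_of_nonneg_left (by linarith) hnn
    have hsum1 : ∑ k ∈ Finset.range (M+2), (QUB5.Tq P S k - QUB5.Tq P S (k+1))
        = ∑ k ∈ Finset.range (M+1), (QUB5.Tq P S (k+1) - QUB5.Tq P S (k+1+1))
          + (QUB5.Tq P S 0 - QUB5.Tq P S (0+1)) :=
      Finset.sum_range_succ' _ (M+1)
    have key : 1 - QUB5.Tq P S (M+2)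
        ≤ QUB5.ev P S 1 + ((2+c+c⁻¹) * (∑ i ∈ Finset.Icc 2 (M+1), QUB5.ev P S i
            + QUB5.ev P S (M+2)) + (1+c⁻¹) * (QUB5.ev P S 1 - QUB5.ev P S (M+2))) := by
      rw [tele, hsum1]
      rw [show QUB5.Tq P S 0 - QUB5.Tq P S (0+1) = QUB5.ev P S 1 from hD0]
      linarith
    have heq : QUB5.ev P S 1 + ((2+c+c⁻¹) * (∑ i ∈ Finset.Icc 2 (M+1), QUB5.ev P S i
            + QUB5.ev P S (M+2)) + (1+c⁻¹) * (QUB5.ev P S 1 - QUB5.ev P S (M+2)))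
        = (1+c) * QUB5.ev P S (M+2)
          + (2+c+c⁻¹) * ∑ i ∈ Finset.Icc 2 (M+1), QUB5.ev P S i
          + (2+c⁻¹) * QUB5.ev P S 1 := by ring
    linarith
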